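/- Let d ≥ 1 be an integer, let β satisfy 0 < β < 1/2, and let κ ≥ 0. There exists a constant C > 0, depending only on d, β and κ, with the following property: for every unit vector ν ∈ ℝ^d, all points x, y ∈ ℝ^d with x ≠ y satisfying |⟨ν, y − x⟩| ≤ κ‖y − x‖², and all real numbers s < t, the directional derivative in direction ν of the map z ↦ Φ(z,t;y,s) at z = x satisfies |∂_ν Φ(x,t;y,s)| = |(4π(t−s))^{−d/2} · (⟨ν, y−x⟩/(2(t−s))) · exp(−‖x−y‖²/(4(t−s)))| ≤ C (t−s)^{−β} ‖x−y‖^{−(d−2β)}. -/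
import Mathlib


open scoped RealInnerProductSpace

lemma aux_rpow_exp (a : ℝ) (ha : 0 < a) :
    ∃ M : ℝ, 0 < M ∧ ∀ u : ℝ, 0 < u → u ^ a * Real.exp (-u) ≤ M := by
  obtain ⟨n, hn⟩ := exists_nat_ge a
  refine ⟨1 + (Nat.factorial n : ℝ), by positivity, fun u hu => ?_⟩
  rcases le_total u 1 with h | h
  · have h1 : u ^ a ≤ 1 := Real.rpow_le_one hu.le h ha.le
    have h2 : Real.exp (-u) ≤ 1 := Real.exp_le_one_iff.mpr (by linarith)
    have h3 : (1:ℝ) ≤ (Nat.factorial n) := by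
      exact_mod_cast Nat.one_le_iff_ne_zero.mpr (Nat.factorial_ne_zero n)
    nlinarith [Real.exp_pos (-u), Real.rpow_pos_of_pos hu a]
  · have h1 : u ^ a ≤ u ^ (n : ℝ) := Real.rpow_le_rpow_of_exponent_le h hn
    have h2 : u ^ n ≤ (Nat.factorial n) * Real.exp u := by
      have hs : u ^ n / (Nat.factorial n) ≤ ∑ i ∈ Finset.range (n+1), u ^ i / (Nat.factorial i) :=
        Finset.single_le_sum (f := fun i => u ^ i / ((Nat.factorial i) : ℝ))
          (fun i _ => by positivity) (Finset.self_mem_range_succ n)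
      have h3 : u ^ n / (Nat.factorial n) ≤ Real.exp u :=
        hs.trans (Real.sum_le_exp_of_nonneg (by linarith) (n+1))
      rw [div_le_iff₀ (by positivity)] at h3
      linarith
    calc u ^ a * Real.exp (-u) ≤ u ^ (n : ℝ) * Real.exp (-u) := by gcongr
      _ = u ^ n * Real.exp (-u) := by rw [Real.rpow_natCast]
      _ ≤ ((Nat.factorial n) * Real.exp u) * Real.exp (-u) := by gcongr
      _ = (Nat.factorial n) := by rw [mul_assoc, ← Real.exp_add]; simp
      _ ≤ 1 + (Nat.factorial n) := by linarith

lemma core_ident (τ r β D : ℝ) (hτ : 0 < τ) (hr : 0 < r) :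
    τ ^ (-D/2 : ℝ) * r ^ 2 / τ =
      (r ^ 2 / (4 * τ)) ^ (D/2 + 1 - β) * 4 ^ (D/2 + 1 - β) *
        (τ ^ (-β) * r ^ (-(D - 2 * β))) := by
  have h4 : (0:ℝ) < 4 := by norm_num
  have hrτ : 0 < r ^ 2 / (4 * τ) := by positivity
  have hlog : Real.log (r ^ 2 / (4 * τ)) = 2 * Real.log r - Real.log 4 - Real.log τ := by
    rw [Real.log_div (by positivity) (by positivity), Real.log_mul (by norm_num) hτ.ne',
      Real.log_pow]
    push_cast; ring
  have hr2 : r ^ 2 = Real.exp (2 * Real.log r) := by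
    rw [show (2:ℝ) * Real.log r = ((2:ℕ):ℝ) * Real.log r by norm_num, ← Real.log_pow,
      Real.exp_log (by positivity)]
  have hτinv : τ⁻¹ = Real.exp (-Real.log τ) := by
    rw [Real.exp_neg, Real.exp_log hτ]
  rw [Real.rpow_def_of_pos hτ, Real.rpow_def_of_pos hτ, Real.rpow_def_of_pos hr,
    Real.rpow_def_of_pos hrτ, Real.rpow_def_of_pos h4, hlog, div_eq_mul_inv, hτinv, hr2,
    ← Real.exp_add, ← Real.exp_add, ← Real.exp_add, ← Real.exp_add, ← Real.exp_add,
    Real.exp_eq_exp]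
  ring

/-- The fundamental solution of the heat equation on `ℝ^d`:
`Φ(x,t;y,s) = (4π(t−s))^{−d/2} exp(−‖x−y‖²/(4(t−s)))` for `t > s`, and `0` for `t ≤ s`. -/
noncomputable def Phi (d : ℕ) (x : EuclideanSpace ℝ (Fin d)) (t : ℝ)
    (y : EuclideanSpace ℝ (Fin d)) (s : ℝ) : ℝ :=
  if t ≤ s then 0
  else (4 * Real.pi * (t - s)) ^ (-(d : ℝ) / 2) * Real.exp (-‖x - y‖ ^ 2 / (4 * (t - s)))

lemma phi_deriv (d : ℕ) (x y ν : EuclideanSpace ℝ (Fin d)) (s t : ℝ) (hst : s < t) :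
    fderiv ℝ (fun z => Phi d z t y s) x ν =
      (4 * Real.pi * (t - s)) ^ (-(d : ℝ) / 2) * (⟪ν, y - x⟫ / (2 * (t - s))) *
        Real.exp (-‖x - y‖ ^ 2 / (4 * (t - s))) := by
  have hts : ¬ t ≤ s := not_le.mpr hst
  have hτ : (0:ℝ) < t - s := sub_pos.mpr hst
  set c := (4 * Real.pi * (t - s)) ^ (-(d : ℝ) / 2) with hc
  have hfun : (fun z => Phi d z t y s)
      = fun z : EuclideanSpace ℝ (Fin d) => c * Real.exp ((-(4 * (t - s))⁻¹) * ‖z - y‖ ^ 2) := by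
    funext z
    simp only [Phi, if_neg hts, ← hc]
    congr 1
    ring
  have h1 : HasFDerivAt (fun z : EuclideanSpace ℝ (Fin d) => ‖z - y‖ ^ 2)
      (2 • (innerSL ℝ (x - y))) x := by
    have := ((hasFDerivAt_id x).sub_const y).norm_sq
    simpa using this
  have h2 := h1.const_mul (-(4 * (t - s))⁻¹)
  have h3 := h2.exp
  have h4 := h3.const_mul c
  rw [hfun, h4.fderiv]
  have hinner : ⟪ν, y - x⟫ = -⟪x - y, ν⟫ := by
    rw [real_inner_comm, ← neg_sub x y, inner_neg_left]
  simp only [ContinuousLinearMap.smul_apply, ContinuousLinearMap.coe_smul', Pi.smul_apply,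
    innerSL_apply_apply, smul_eq_mul, hinner]
  rw [show -‖x - y‖ ^ 2 / (4 * (t - s)) = (-(4 * (t - s))⁻¹) * ‖x - y‖ ^ 2 by ring]
  field_simp
  ring

/-- Estimate (E2): for a unit vector `ν` with the flatness property
`|⟨ν, y−x⟩| ≤ κ‖y−x‖²`, the directional derivative of `Φ(·,t;y,s)` at `x` in direction `ν`
equals the explicit formula and is bounded by `C (t−s)^{−β} ‖x−y‖^{−(d−2β)}`. -/
theorem heat_kernel_normal_derivative_bound (d : ℕ) (hd : 1 ≤ d) (β κ : ℝ)
    (hβ0 : 0 < β) (hβ : β < 1 / 2) (hκ : 0 ≤ κ) :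
    ∃ C : ℝ, 0 < C ∧ ∀ (ν x y : EuclideanSpace ℝ (Fin d)), ‖ν‖ = 1 → x ≠ y →
      |⟪ν, y - x⟫| ≤ κ * ‖y - x‖ ^ 2 → ∀ s t : ℝ, s < t →
      |fderiv ℝ (fun z => Phi d z t y s) x ν| =
        |(4 * Real.pi * (t - s)) ^ (-(d : ℝ) / 2) * (⟪ν, y - x⟫ / (2 * (t - s))) *
          Real.exp (-‖x - y‖ ^ 2 / (4 * (t - s)))| ∧
      |(4 * Real.pi * (t - s)) ^ (-(d : ℝ) / 2) * (⟪ν, y - x⟫ / (2 * (t - s))) *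
          Real.exp (-‖x - y‖ ^ 2 / (4 * (t - s)))| ≤
        C * (t - s) ^ (-β) * ‖x - y‖ ^ (-((d : ℝ) - 2 * β)) := by
  set a : ℝ := (d : ℝ)/2 + 1 - β with ha_def
  have hd1 : (1:ℝ) ≤ (d:ℝ) := by exact_mod_cast hd
  have ha : 0 < a := by rw [ha_def]; linarith
  obtain ⟨M, hM0, hM⟩ := aux_rpow_exp a ha
  set K : ℝ := (4 * Real.pi) ^ (-(d : ℝ)/2) * (κ/2) * 4 ^ a with hK_def
  have hK0 : 0 ≤ K := by
    have : (0:ℝ) < 4 * Real.pi := by positivity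
    positivity
  refine ⟨K * M + 1, by positivity, fun ν x y hν hxy hflat s t hst => ?_⟩
  have hτ : (0:ℝ) < t - s := sub_pos.mpr hst
  have hr : (0:ℝ) < ‖x - y‖ := by
    rw [norm_pos_iff]
    exact sub_ne_zero.mpr hxy
  have hflat' : |⟪ν, y - x⟫| ≤ κ * ‖x - y‖ ^ 2 := by rwa [norm_sub_rev y x] at hflat
  refine ⟨by rw [phi_deriv d x y ν s t hst], ?_⟩
  set r := ‖x - y‖ with hr_def
  set τ := t - s with hτ_def
  clear_value r τ
  have hπτ : (0:ℝ) < 4 * Real.pi * τ := by positivity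
  have hcsplit : (4 * Real.pi * τ) ^ (-(d : ℝ)/2)
      = (4 * Real.pi) ^ (-(d : ℝ)/2) * τ ^ (-(d : ℝ)/2) :=
    Real.mul_rpow (by positivity) hτ.le
  have hEarg : -r ^ 2 / (4 * τ) = -(r ^ 2 / (4 * τ)) := by ring
  calc |(4 * Real.pi * τ) ^ (-(d : ℝ)/2) * (⟪ν, y - x⟫ / (2 * τ)) *
          Real.exp (-r ^ 2 / (4 * τ))|
      = (4 * Real.pi) ^ (-(d : ℝ)/2) * τ ^ (-(d : ℝ)/2) * (|⟪ν, y - x⟫| / (2 * τ)) *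
          Real.exp (-r ^ 2 / (4 * τ)) := by
        rw [abs_mul, abs_mul, abs_div, abs_of_pos (Real.rpow_pos_of_pos hπτ _),
          abs_of_pos (Real.exp_pos _), abs_of_pos (by positivity : (0:ℝ) < 2 * τ), hcsplit]
    _ ≤ (4 * Real.pi) ^ (-(d : ℝ)/2) * τ ^ (-(d : ℝ)/2) * ((κ * r ^ 2) / (2 * τ)) *
          Real.exp (-r ^ 2 / (4 * τ)) := by
        gcongr
    _ = K * ((r ^ 2 / (4 * τ)) ^ a * Real.exp (-(r ^ 2 / (4 * τ)))) *
          (τ ^ (-β) * r ^ (-((d : ℝ) - 2 * β))) := by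
        have e1 : (4 * Real.pi) ^ (-(d : ℝ)/2) * τ ^ (-(d : ℝ)/2) * ((κ * r ^ 2) / (2 * τ)) *
              Real.exp (-r ^ 2 / (4 * τ))
            = (4 * Real.pi) ^ (-(d : ℝ)/2) * (κ/2) *
              (τ ^ (-(d : ℝ)/2) * r ^ 2 / τ) * Real.exp (-r ^ 2 / (4 * τ)) := by ring
        rw [e1, core_ident τ r β (d : ℝ) hτ hr, hEarg, hK_def, ha_def]
        ring
    _ ≤ K * M * (τ ^ (-β) * r ^ (-((d : ℝ) - 2 * β))) := by
        gcongr
        exact hM _ (by positivity)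
    _ ≤ (K * M + 1) * τ ^ (-β) * r ^ (-((d : ℝ) - 2 * β)) := by
        have h1 : (0:ℝ) < τ ^ (-β) := Real.rpow_pos_of_pos hτ _
        have h2 : (0:ℝ) < r ^ (-((d : ℝ) - 2 * β)) := Real.rpow_pos_of_pos hr _
        nlinarith [mul_pos h1 h2]
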